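/- Let μ be a Borel probability measure on ℝ and s>0. If sup_{|a|≤s} D(μ ‖ T_a μ) < ∞ (equivalently, if μ ≪ T_a μ for every a with |a|≤s), then μ is absolutely continuous with respect to Lebesgue measure on ℝ. -/

import Mathlib

open MeasureTheory Filter Real Set
open scoped ENNReal NNReal Classical

noncomputable section

/-- Shift operator on Borel measures: `(shiftMeasure a μ) B = μ (B - a)`. -/
def shiftMeasure (a : ℝ) (μ : Measure ℝ) : Measure ℝ := μ.map (· + a)

/-- Kullback–Leibler divergence between Borel measures on `ℝ`. -/
def KLdiv (μ ν : Measure ℝ) : ℝ≥0∞ :=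
  if μ ≪ ν ∧ Integrable (llr μ ν) μ then ENNReal.ofReal (∫ x, llr μ ν x ∂μ) else ⊤

/-- Standing assumptions on the cost function. -/
structure IsCostFun (c : ℝ → ℝ) (α β : ℝ) : Prop where
  nonneg : ∀ x, 0 ≤ c x
  zero : c 0 = 0
  even : ∀ x, c (-x) = c x
  mono : ∀ x y : ℝ, |x| ≤ |y| → c x ≤ c y
  continuous : Continuous c
  tail : Tendsto (fun x : ℝ => c x / (β * x ^ α)) atTop (nhds 1)

lemma shiftMeasure_comp (a b : ℝ) (μ : Measure ℝ) :
    shiftMeasure a (shiftMeasure b μ) = shiftMeasure (b + a) μ := by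
  simp only [shiftMeasure]
  rw [Measure.map_map (measurable_add_const a) (measurable_add_const b)]
  congr 1
  ext x
  simp [add_assoc]

/-- Any feasible additive mechanism is absolutely continuous: if `μ ≪ T_a μ` for every
`|a| ≤ s` (equivalently, `sup_{|a|≤s} D(μ‖T_a μ) < ∞`), then `μ ≪ λ`. -/
theorem feasible_additive_is_absolutely_continuous (μ : Measure ℝ)
    (hμ : IsProbabilityMeasure μ) (s : ℝ) (hs : 0 < s)
    (hac : ∀ a : ℝ, |a| ≤ s → μ ≪ shiftMeasure a μ) :
    μ ≪ volume := by
  -- Step 1: extend to all shifts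
  have key : ∀ n : ℕ, ∀ t : ℝ, |t| ≤ s → μ ≪ shiftMeasure ((n : ℝ) * t) μ := by
    intro n
    induction n with
    | zero =>
      intro t ht
      simp only [Nat.cast_zero, zero_mul, shiftMeasure]
      have : (fun x : ℝ => x + 0) = id := by ext x; simp
      rw [this, Measure.map_id]
    | succ n ih =>
      intro t ht
      have h1 : μ ≪ shiftMeasure ((n : ℝ) * t) μ := ih t ht
      have h2 : shiftMeasure ((n : ℝ) * t) μ ≪ shiftMeasure ((n : ℝ) * t) (shiftMeasure t μ) :=
        Measure.AbsolutelyContinuous.map (hac t ht) (measurable_add_const _)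
      rw [shiftMeasure_comp] at h2
      have : t + (n : ℝ) * t = ((n : ℕ) + 1 : ℕ) * t := by push_cast; ring
      rw [this] at h2
      exact h1.trans h2
  have hall : ∀ a : ℝ, μ ≪ shiftMeasure a μ := by
    intro a
    rcases le_or_gt |a| s with h | h
    · exact hac a h
    · set n : ℕ := ⌈|a| / s⌉₊ with hn
      have hn0 : 0 < (n : ℝ) := by
        have : 0 < |a| / s := div_pos (lt_trans hs h) hs
        exact_mod_cast Nat.ceil_pos.mpr this
      have ht : |a / n| ≤ s := by
        rw [abs_div, abs_of_pos hn0, div_le_iff₀ hn0]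
        calc |a| = (|a| / s) * s := by field_simp
        _ ≤ (n : ℝ) * s := by
          apply mul_le_mul_of_nonneg_right (Nat.le_ceil _) hs.le
        _ = s * n := by ring
      have := key n (a / n) ht
      rwa [mul_div_cancel₀ a (ne_of_gt hn0)] at this
  -- Step 2: Fubini argument
  refine Measure.AbsolutelyContinuous.mk (fun N hN hN0 => ?_)
  have hmeas : ∀ a : ℝ, shiftMeasure a μ N = μ ((· + a) ⁻¹' N) := fun a =>
    Measure.map_apply (measurable_add_const a) hN
  have hzero : ∫⁻ a, μ ((· + a) ⁻¹' N) ∂(volume : Measure ℝ) = 0 := by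
    have hmf : Measurable fun p : ℝ × ℝ => N.indicator (1 : ℝ → ℝ≥0∞) (p.2 + p.1) :=
      (measurable_one.indicator hN).comp (measurable_snd.add measurable_fst)
    calc ∫⁻ a, μ ((· + a) ⁻¹' N) ∂(volume : Measure ℝ)
        = ∫⁻ a, ∫⁻ x, N.indicator 1 (x + a) ∂μ ∂(volume : Measure ℝ) := by
          refine lintegral_congr fun a => ?_
          rw [← lintegral_indicator_one (hN.preimage (measurable_add_const a))]
          refine lintegral_congr fun x => ?_
          simp [Set.indicator_apply, Set.mem_preimage]
      _ = ∫⁻ x, ∫⁻ a, N.indicator 1 (x + a) ∂(volume : Measure ℝ) ∂μ :=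
          lintegral_lintegral_swap hmf.aemeasurable
      _ = ∫⁻ x, volume N ∂μ := by
          refine lintegral_congr fun x => ?_
          have h1 : (fun a : ℝ => N.indicator 1 (x + a))
              = ((fun y => x + y) ⁻¹' N).indicator (1 : ℝ → ℝ≥0∞) := by
            ext a; simp [Set.indicator_apply, Set.mem_preimage]
          rw [h1, lintegral_indicator_one (hN.preimage (measurable_const_add x)),
            measure_preimage_add]
      _ = 0 := by simp [hN0]
  have hmeas' : Measurable fun a : ℝ => μ ((· + a) ⁻¹' N) := by
    have hset : MeasurableSet {p : ℝ × ℝ | p.2 + p.1 ∈ N} :=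
      (measurable_snd.add measurable_fst) hN
    have := measurable_measure_prodMk_left (ν := μ) hset
    convert this using 2 with a
    rfl
  have hae : ∀ᵐ a ∂(volume : Measure ℝ), μ ((· + a) ⁻¹' N) = 0 :=
    (lintegral_eq_zero_iff hmeas').mp hzero
  have hvne : (volume : Measure ℝ) ≠ 0 := by
    intro h
    have := congrArg (fun m : Measure ℝ => m (Set.Icc (0:ℝ) 1)) h
    simp [Real.volume_Icc] at this
  have : (MeasureTheory.ae (volume : Measure ℝ)).NeBot := ae_neBot.mpr hvne
  obtain ⟨a, ha⟩ := hae.exists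
  have := hall a
  rw [← hmeas a] at ha
  exact this ha

end
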